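/- arXiv:0809.3822 — 9 statements merged into one kernel-verified Lean document; each statement's English description precedes it below -/
import Mathlib

section
/- Let A be a join-semilattice, c ∈ A, and I₁, I₂ subsemilattices with A = I₁ ⊕_c I₂. Then the relation φ_c(x₁, x₂, x) defines a function from I₁ × I₂ to A: for all x₁ ∈ I₁, x₂ ∈ I₂, and x, z ∈ A, if φ_c(x₁, x₂, x) and φ_c(x₁, x₂, z) then x = z. -/
variable {α : Type*}

/-- `PMeet a b m`: the infimum of `{a, b}` exists and equals `m`. -/
def PMeet [SemilatticeSup α] (a b m : α) : Prop :=
  m ≤ a ∧ m ≤ b ∧ ∀ u, u ≤ a → u ≤ b → u ≤ m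

/-- Partial equation `a ∧ b = a' ∧ b'`: if either infimum exists, so does the
other and they are equal. -/
def MeetEq [SemilatticeSup α] (a b a' b' : α) : Prop :=
  (∀ m, PMeet a b m → PMeet a' b' m) ∧ (∀ m, PMeet a' b' m → PMeet a b m)

/-- Partial equation `(a ∧ b) ∨ y = a' ∧ b'`: if either side exists, so does
the other and they are equal. -/
def MeetJoinEq [SemilatticeSup α] (a b y a' b' : α) : Prop :=
  (∀ m, PMeet a b m → PMeet a' b' (m ⊔ y)) ∧
  (∀ m', PMeet a' b' m' → ∃ m, PMeet a b m ∧ m ⊔ y = m')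

/-- `φ_c(x₁, x₂, x)`: the conjunction of dist, p1, p2 and join. -/
def Phi [SemilatticeSup α] (c x₁ x₂ x : α) : Prop :=
  PMeet (x ⊔ x₁) (x ⊔ x₂) x ∧
  PMeet (x ⊔ x₁) (c ⊔ x₁) x₁ ∧
  PMeet (x ⊔ x₂) (c ⊔ x₂) x₂ ∧
  x₁ ⊔ x₂ = x ⊔ c

/-- A subsemilattice: a subset closed under join. -/
def SubSemilattice [SemilatticeSup α] (I : Set α) : Prop :=
  ∀ a ∈ I, ∀ b ∈ I, a ⊔ b ∈ I

/-- `A = I₁ ⊕_c I₂`: the generalized (c-)direct sum of two subsemilattices. -/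
structure CDirectSum [SemilatticeSup α] (c : α) (I₁ I₂ : Set α) : Prop where
  sub1 : SubSemilattice I₁
  sub2 : SubSemilattice I₂
  mod1 : ∀ x y : α, ∀ x₁ ∈ I₁, ∀ x₂ ∈ I₂, x₁ ⊔ x₂ ≤ x ⊔ c →
    MeetJoinEq (x ⊔ x₁) (x ⊔ x₂) y (x ⊔ y ⊔ x₁) (x ⊔ y ⊔ x₂)
  mod2 : ∀ x y : α, ∀ x₁ ∈ I₁, ∀ x₂ ∈ I₂, x ≤ x₁ ⊔ x₂ →
    MeetJoinEq (x ⊔ x₁) (c ⊔ x₁) y (x ⊔ y ⊔ x₁) (c ⊔ y ⊔ x₁) ∧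
    MeetJoinEq (x ⊔ x₂) (c ⊔ x₂) y (x ⊔ y ⊔ x₂) (c ⊔ y ⊔ x₂)
  abs1 : ∀ x₁ ∈ I₁, ∀ y₁ ∈ I₁, ∀ z₂ ∈ I₂, MeetEq x₁ (y₁ ⊔ z₂) x₁ (y₁ ⊔ c)
  abs2 : ∀ x₂ ∈ I₂, ∀ y₂ ∈ I₂, ∀ z₁ ∈ I₁, MeetEq x₂ (y₂ ⊔ z₁) x₂ (y₂ ⊔ c)
  exi : ∀ x₁ ∈ I₁, ∀ x₂ ∈ I₂, ∃ x : α, Phi c x₁ x₂ x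
  onto : ∀ x : α, ∃ x₁ ∈ I₁, ∃ x₂ ∈ I₂, Phi c x₁ x₂ x

/-- in a c-direct sum, φ_c defines a function: images are unique. -/
theorem phi_functional [SemilatticeSup α] (c : α) (I₁ I₂ : Set α)
    (h : CDirectSum c I₁ I₂) :
    ∀ x₁ ∈ I₁, ∀ x₂ ∈ I₂, ∀ x z : α,
      Phi c x₁ x₂ x → Phi c x₁ x₂ z → x = z := by
  have key : ∀ x₁ ∈ I₁, ∀ x₂ ∈ I₂, ∀ x z : α,
      Phi c x₁ x₂ x → Phi c x₁ x₂ z → z ≤ x := by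
    intro x₁ h₁ x₂ h₂ x z hx hz
    obtain ⟨hxd, hxp1, hxp2, hxj⟩ := hx
    obtain ⟨hzd, hzp1, hzp2, hzj⟩ := hz
    have hzc : z ⊔ c = x ⊔ c := by rw [← hzj, hxj]
    have hzle : z ≤ x₁ ⊔ x₂ := by rw [hzj]; exact le_sup_left
    have hm := h.mod2 z x x₁ h₁ x₂ h₂ hzle
    have h1 := hm.1.1 x₁ hzp1
    have h2 := hm.2.1 x₂ hzp2
    have hzxc : z ≤ x ⊔ c := by rw [← hzc]; exact le_sup_left
    have hz1 : z ≤ x ⊔ x₁ := by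
      have := h1.2.2 z (le_sup_left.trans le_sup_left)
        (hzxc.trans (sup_le (le_sup_right.trans le_sup_left)
          (le_sup_left.trans le_sup_left)))
      exact this.trans (sup_le le_sup_right le_sup_left)
    have hz2 : z ≤ x ⊔ x₂ := by
      have := h2.2.2 z (le_sup_left.trans le_sup_left)
        (hzxc.trans (sup_le (le_sup_right.trans le_sup_left)
          (le_sup_left.trans le_sup_left)))
      exact this.trans (sup_le le_sup_right le_sup_left)
    exact hxd.2.2 z hz1 hz2
  intro x₁ h₁ x₂ h₂ x z hx hz
  exact le_antisymm (key x₁ h₁ x₂ h₂ z x hz hx) (key x₁ h₁ x₂ h₂ x z hx hz)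
end

section
/- Let A be a join-semilattice, c ∈ A, and I₁, I₂ subsemilattices with A = I₁ ⊕_c I₂. Then the map φ: I₁ × I₂ → A determined by φ_c is injective: if φ_c(x₁, x₂, x) and φ_c(y₁, y₂, x), then x₁ = y₁ and x₂ = y₂. -/
variable {α : Type*}

lemma phi_le_aux [SemilatticeSup α] {c : α} {I₁ I₂ : Set α}
    (h : CDirectSum c I₁ I₂) {x₁ x₂ y₁ y₂ x : α}
    (hx₁ : x₁ ∈ I₁) (hx₂ : x₂ ∈ I₂) (hy₁ : y₁ ∈ I₁) (hy₂ : y₂ ∈ I₂)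
    (hx : Phi c x₁ x₂ x) (hy : Phi c y₁ y₂ x) : x₁ ≤ y₁ ∧ x₂ ≤ y₂ := by
  obtain ⟨hxd, hxp1, hxp2, hxj⟩ := hx
  obtain ⟨hyd, hyp1, hyp2, hyj⟩ := hy
  have hje : x₁ ⊔ x₂ = y₁ ⊔ y₂ := by rw [hxj, hyj]
  -- first component preliminaries
  have h1 : x₁ ≤ y₁ ⊔ y₂ := hje ▸ le_sup_left
  have pm1 : PMeet x₁ (y₁ ⊔ y₂) x₁ := ⟨le_refl _, h1, fun u hu _ => hu⟩
  have h2 : x₁ ≤ y₁ ⊔ c := ((h.abs1 x₁ hx₁ y₁ hy₁ y₂ hy₂).1 x₁ pm1).2.1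
  have pm2 : PMeet x₁ (y₁ ⊔ c) x₁ := ⟨le_refl _, h2, fun u hu _ => hu⟩
  have h3 : x₁ ≤ y₁ ⊔ x₂ := ((h.abs1 x₁ hx₁ y₁ hy₁ x₂ hx₂).2 x₁ pm2).2.1
  -- second component preliminaries
  have h1' : x₂ ≤ y₂ ⊔ y₁ := by
    have : x₂ ≤ y₁ ⊔ y₂ := hje ▸ le_sup_right
    simpa [sup_comm] using this
  have pm1' : PMeet x₂ (y₂ ⊔ y₁) x₂ := ⟨le_refl _, h1', fun u hu _ => hu⟩
  have h2' : x₂ ≤ y₂ ⊔ c := ((h.abs2 x₂ hx₂ y₂ hy₂ y₁ hy₁).1 x₂ pm1').2.1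
  have pm2' : PMeet x₂ (y₂ ⊔ c) x₂ := ⟨le_refl _, h2', fun u hu _ => hu⟩
  have h3' : x₂ ≤ y₂ ⊔ x₁ := ((h.abs2 x₂ hx₂ y₂ hy₂ x₁ hx₁).2 x₂ pm2').2.1
  -- use Mod1 with y := y₁ and y := y₂
  have cond : x₁ ⊔ x₂ ≤ x ⊔ c := le_of_eq hxj
  have m1 : PMeet (x ⊔ y₁ ⊔ x₁) (x ⊔ y₁ ⊔ x₂) (x ⊔ y₁) :=
    (h.mod1 x y₁ x₁ hx₁ x₂ hx₂ cond).1 x hxd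
  have m2 : PMeet (x ⊔ y₂ ⊔ x₁) (x ⊔ y₂ ⊔ x₂) (x ⊔ y₂) :=
    (h.mod1 x y₂ x₁ hx₁ x₂ hx₂ cond).1 x hxd
  have hx1le : x₁ ≤ x ⊔ y₁ :=
    m1.2.2 x₁ le_sup_right (h3.trans (sup_le (le_sup_right.trans le_sup_left) le_sup_right))
  have hx2le : x₂ ≤ x ⊔ y₂ :=
    m2.2.2 x₂ (h3'.trans (sup_le (le_sup_right.trans le_sup_left) le_sup_right)) le_sup_right
  constructor
  · exact hyp1.2.2 x₁ hx1le (h2.trans (le_of_eq (sup_comm _ _)))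
  · exact hyp2.2.2 x₂ hx2le (h2'.trans (le_of_eq (sup_comm _ _)))

/-- in a c-direct sum, the map determined by φ_c is injective. -/
theorem phi_injective [SemilatticeSup α] (c : α) (I₁ I₂ : Set α)
    (h : CDirectSum c I₁ I₂) :
    ∀ x₁ ∈ I₁, ∀ x₂ ∈ I₂, ∀ y₁ ∈ I₁, ∀ y₂ ∈ I₂, ∀ x : α,
      Phi c x₁ x₂ x → Phi c y₁ y₂ x → x₁ = y₁ ∧ x₂ = y₂ := by
  intro x₁ hx₁ x₂ hx₂ y₁ hy₁ y₂ hy₂ x hx hy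
  obtain ⟨a1, a2⟩ := phi_le_aux h hx₁ hx₂ hy₁ hy₂ hx hy
  obtain ⟨b1, b2⟩ := phi_le_aux h hy₁ hy₂ hx₁ hx₂ hy hx
  exact ⟨le_antisymm a1 b1, le_antisymm a2 b2⟩
end

section
/- Let A be a join-semilattice, c ∈ A, and I₁, I₂ subsemilattices with A = I₁ ⊕_c I₂. Then the bijection φ: I₁ × I₂ → A determined by φ_c preserves joins: if φ_c(x₁, x₂, x) and φ_c(z₁, z₂, z), then φ_c(x₁∨z₁, x₂∨z₂, x∨z). -/
variable {α : Type*}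

lemma PMeet.comm [SemilatticeSup α] {a b m : α} (h : PMeet a b m) : PMeet b a m :=
  ⟨h.2.1, h.1, fun u hb ha => h.2.2 u ha hb⟩

lemma MeetJoinEq.comm [SemilatticeSup α] {a b y a' b' : α}
    (h : MeetJoinEq a b y a' b') : MeetJoinEq b a y b' a' :=
  ⟨fun m hm => (h.1 m hm.comm).comm,
   fun m' hm' => by obtain ⟨m, hm, he⟩ := h.2 m' hm'.comm; exact ⟨m, hm.comm, he⟩⟩

lemma Phi.swap [SemilatticeSup α] {c x₁ x₂ x : α} (h : Phi c x₁ x₂ x) :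
    Phi c x₂ x₁ x :=
  ⟨h.1.comm, h.2.2.1, h.2.1, by rw [sup_comm x₂ x₁]; exact h.2.2.2⟩

lemma CDirectSum.swap [SemilatticeSup α] {c : α} {I₁ I₂ : Set α}
    (h : CDirectSum c I₁ I₂) : CDirectSum c I₂ I₁ where
  sub1 := h.sub2
  sub2 := h.sub1
  mod1 x y x₂ h2 x₁ h1 hle :=
    (h.mod1 x y x₁ h1 x₂ h2 (by rwa [sup_comm x₁ x₂])).comm
  mod2 x y x₂ h2 x₁ h1 hle :=
    (h.mod2 x y x₁ h1 x₂ h2 (by rwa [sup_comm x₁ x₂])).symm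
  abs1 := h.abs2
  abs2 := h.abs1
  exi x₂ h2 x₁ h1 := by obtain ⟨x, hx⟩ := h.exi x₁ h1 x₂ h2; exact ⟨x, hx.swap⟩
  onto x := by
    obtain ⟨x₁, h1, x₂, h2, hx⟩ := h.onto x
    exact ⟨x₂, h2, x₁, h1, hx.swap⟩

/-- Monotonicity of the first component of the φ-decomposition. -/
lemma mono1 [SemilatticeSup α] {c : α} {I₁ I₂ : Set α} (h : CDirectSum c I₁ I₂)
    {x₁ x₂ t₁ t₂ x w : α} (hx₁ : x₁ ∈ I₁) (hx₂ : x₂ ∈ I₂) (ht₁ : t₁ ∈ I₁)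
    (ht₂ : t₂ ∈ I₂) (hx : Phi c x₁ x₂ x) (ht : Phi c t₁ t₂ w) (hxw : x ≤ w) :
    x₁ ≤ t₁ := by
  have hx1le : x₁ ≤ t₁ ⊔ t₂ := by
    calc x₁ ≤ x₁ ⊔ x₂ := le_sup_left
    _ = x ⊔ c := hx.2.2.2
    _ ≤ w ⊔ c := sup_le_sup_right hxw c
    _ = t₁ ⊔ t₂ := ht.2.2.2.symm
  -- (i)  x₁ ≤ t₁ ⊔ c (absorption)
  have i : PMeet x₁ (t₁ ⊔ c) x₁ :=
    (h.abs1 x₁ hx₁ t₁ ht₁ t₂ ht₂).1 x₁ ⟨le_rfl, hx1le, fun u hu _ => hu⟩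
  -- (ii) x₁ ≤ t₁ ⊔ x₂ (absorption the other way)
  have ii : x₁ ≤ t₁ ⊔ x₂ :=
    ((h.abs1 x₁ hx₁ t₁ ht₁ x₂ hx₂).2 x₁ ⟨le_rfl, i.2.1, fun u hu _ => hu⟩).2.1
  -- (iii) (x ⊔ t₁ ⊔ x₁) ∧ (x ⊔ t₁ ⊔ x₂) = x ⊔ t₁   (Mod1)
  have iii : PMeet (x ⊔ t₁ ⊔ x₁) (x ⊔ t₁ ⊔ x₂) (x ⊔ t₁) :=
    (h.mod1 x t₁ x₁ hx₁ x₂ hx₂ hx.2.2.2.le).1 x hx.1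
  -- (iv) x₁ ≤ x ⊔ t₁
  have iv : x₁ ≤ x ⊔ t₁ :=
    iii.2.2 x₁ le_sup_right (ii.trans (sup_le_sup_right le_sup_right x₂))
  -- (v)  (x ⊔ t₁) ∧ (c ⊔ t₁) = t₁   (Mod2, existential direction)
  have hxtt : x ≤ t₁ ⊔ t₂ := by rw [ht.2.2.2]; exact hxw.trans le_sup_left
  have hxw' : x ⊔ w = w := sup_eq_right.mpr hxw
  have hpm : PMeet (x ⊔ w ⊔ t₁) (c ⊔ w ⊔ t₁) (w ⊔ t₁) := by
    refine ⟨sup_le_sup_right le_sup_right t₁, sup_le_sup_right le_sup_right t₁,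
      fun u hu _ => ?_⟩
    rwa [hxw'] at hu
  obtain ⟨p, hp, -⟩ := (h.mod2 x w t₁ ht₁ t₂ ht₂ hxtt).1.2 (w ⊔ t₁) hpm
  have hpt : p ≤ t₁ := ht.2.1.2.2 p (hp.1.trans (sup_le_sup_right hxw t₁)) hp.2.1
  have htp : t₁ ≤ p := hp.2.2 t₁ le_sup_right le_sup_right
  have hv : PMeet (x ⊔ t₁) (c ⊔ t₁) t₁ := by
    have : p = t₁ := le_antisymm hpt htp
    rwa [this] at hp
  -- conclusion
  exact hv.2.2 x₁ iv (i.2.1.trans (sup_comm t₁ c).le)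

/-- The `p1` part of the goal, in a form usable for both components. -/
lemma p1_aux [SemilatticeSup α] {c : α} {I₁ I₂ : Set α} (h : CDirectSum c I₁ I₂)
    {x₁ x₂ z₁ z₂ x z : α} (hx₁ : x₁ ∈ I₁) (hx₂ : x₂ ∈ I₂) (hz₁ : z₁ ∈ I₁)
    (hz₂ : z₂ ∈ I₂) (hx : Phi c x₁ x₂ x) (hz : Phi c z₁ z₂ z) :
    PMeet (x ⊔ z ⊔ (x₁ ⊔ z₁)) (c ⊔ (x₁ ⊔ z₁)) (x₁ ⊔ z₁) := by
  have hxle : x ≤ x₁ ⊔ x₂ := by rw [hx.2.2.2]; exact le_sup_left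
  have hzle : z ≤ z₁ ⊔ z₂ := by rw [hz.2.2.2]; exact le_sup_left
  have stepA : PMeet (x ⊔ (z ⊔ z₁) ⊔ x₁) (c ⊔ (z ⊔ z₁) ⊔ x₁) (x₁ ⊔ (z ⊔ z₁)) :=
    (h.mod2 x (z ⊔ z₁) x₁ hx₁ x₂ hx₂ hxle).1.1 x₁ hx.2.1
  have stepB : PMeet (z ⊔ x₁ ⊔ z₁) (c ⊔ x₁ ⊔ z₁) (z₁ ⊔ x₁) :=
    (h.mod2 z x₁ z₁ hz₁ z₂ hz₂ hzle).1.1 z₁ hz.2.1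
  refine ⟨le_sup_right, le_sup_right, fun u h1 h2 => ?_⟩
  have e1 : x ⊔ (z ⊔ z₁) ⊔ x₁ = x ⊔ z ⊔ (x₁ ⊔ z₁) := by ac_rfl
  have e2 : c ⊔ (z ⊔ z₁) ⊔ x₁ = c ⊔ (x₁ ⊔ z₁) ⊔ z := by ac_rfl
  have hA : u ≤ x₁ ⊔ (z ⊔ z₁) :=
    stepA.2.2 u (by rw [e1]; exact h1) (by rw [e2]; exact h2.trans le_sup_left)
  have e3 : z ⊔ x₁ ⊔ z₁ = x₁ ⊔ (z ⊔ z₁) := by ac_rfl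
  have e4 : c ⊔ x₁ ⊔ z₁ = c ⊔ (x₁ ⊔ z₁) := by ac_rfl
  have hB : u ≤ z₁ ⊔ x₁ :=
    stepB.2.2 u (by rw [e3]; exact hA) (by rw [e4]; exact h2)
  exact hB.trans (sup_comm z₁ x₁).le





/-- in a c-direct sum, the bijection determined by φ_c preserves
joins. -/
theorem phi_preserves_join [SemilatticeSup α] (c : α) (I₁ I₂ : Set α)
    (h : CDirectSum c I₁ I₂) :
    ∀ x₁ ∈ I₁, ∀ x₂ ∈ I₂, ∀ z₁ ∈ I₁, ∀ z₂ ∈ I₂, ∀ x z : α,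
      Phi c x₁ x₂ x → Phi c z₁ z₂ z →
      Phi c (x₁ ⊔ z₁) (x₂ ⊔ z₂) (x ⊔ z) := by
  intro x₁ hx₁ x₂ hx₂ z₁ hz₁ z₂ hz₂ x z hx hz
  obtain ⟨t₁, ht₁, t₂, ht₂, ht⟩ := h.onto (x ⊔ z)
  have m1 : x₁ ≤ t₁ := mono1 h hx₁ hx₂ ht₁ ht₂ hx ht le_sup_left
  have m2 : z₁ ≤ t₁ := mono1 h hz₁ hz₂ ht₁ ht₂ hz ht le_sup_right
  have m3 : x₂ ≤ t₂ := mono1 h.swap hx₂ hx₁ ht₂ ht₁ hx.swap ht.swap le_sup_left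
  have m4 : z₂ ≤ t₂ := mono1 h.swap hz₂ hz₁ ht₂ ht₁ hz.swap ht.swap le_sup_right
  refine ⟨?_, ?_, ?_, ?_⟩
  · -- dist
    exact ⟨le_sup_left, le_sup_left, fun u h1 h2 =>
      ht.1.2.2 u (h1.trans (sup_le_sup_left (sup_le m1 m2) _))
        (h2.trans (sup_le_sup_left (sup_le m3 m4) _))⟩
  · -- p1
    exact p1_aux h hx₁ hx₂ hz₁ hz₂ hx hz
  · -- p2
    exact p1_aux h.swap hx₂ hx₁ hz₂ hz₁ hx.swap hz.swap
  · -- join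
    rw [sup_sup_sup_comm, hx.2.2.2, hz.2.2.2, sup_sup_sup_comm, sup_idem]
end

section
/- Let A be a join-semilattice, c ∈ A, and I₁, I₂ subsemilattices with A = I₁ ⊕_c I₂. Then φ_c defines an isomorphism of semilattices between I₁ × I₂ (with componentwise join) and A. -/
variable {α : Type*}

section PhiAux

variable [SemilatticeSup α] {c : α} {I₁ I₂ : Set α}

theorem Phi.dist {x₁ x₂ x : α} (h : Phi c x₁ x₂ x) :
    PMeet (x ⊔ x₁) (x ⊔ x₂) x := h.1

theorem Phi.p1 {x₁ x₂ x : α} (h : Phi c x₁ x₂ x) :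
    PMeet (x ⊔ x₁) (c ⊔ x₁) x₁ := h.2.1

theorem Phi.p2 {x₁ x₂ x : α} (h : Phi c x₁ x₂ x) :
    PMeet (x ⊔ x₂) (c ⊔ x₂) x₂ := h.2.2.1

theorem Phi.join {x₁ x₂ x : α} (h : Phi c x₁ x₂ x) :
    x₁ ⊔ x₂ = x ⊔ c := h.2.2.2

theorem pmeet_self_of_le {a b : α} (hab : a ≤ b) : PMeet a b a :=
  ⟨le_refl a, hab, fun _ hu _ => hu⟩

/-- Key consequence of (exi): `c ≤ a₁ ⊔ a₂` for any `a₁ ∈ I₁`, `a₂ ∈ I₂`. -/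
theorem c_le_sup (h : CDirectSum c I₁ I₂) {a₁ a₂ : α} (h1 : a₁ ∈ I₁) (h2 : a₂ ∈ I₂) :
    c ≤ a₁ ⊔ a₂ := by
  obtain ⟨x, hx⟩ := h.exi a₁ h1 a₂ h2
  rw [hx.join]; exact le_sup_right

/-- `p1` lifted by an arbitrary `y`, via (Mod2). -/
theorem lift_p1 (h : CDirectSum c I₁ I₂) {x₁ x₂ x : α} (h1 : x₁ ∈ I₁) (h2 : x₂ ∈ I₂)
    (hx : Phi c x₁ x₂ x) (y : α) : PMeet (x ⊔ y ⊔ x₁) (c ⊔ y ⊔ x₁) (x₁ ⊔ y) := by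
  have hle : x ≤ x₁ ⊔ x₂ := by rw [hx.join]; exact le_sup_left
  exact ((h.mod2 x y x₁ h1 x₂ h2 hle).1).1 x₁ hx.p1

/-- `p2` lifted by an arbitrary `y`, via (Mod2). -/
theorem lift_p2 (h : CDirectSum c I₁ I₂) {x₁ x₂ x : α} (h1 : x₁ ∈ I₁) (h2 : x₂ ∈ I₂)
    (hx : Phi c x₁ x₂ x) (y : α) : PMeet (x ⊔ y ⊔ x₂) (c ⊔ y ⊔ x₂) (x₂ ⊔ y) := by
  have hle : x ≤ x₁ ⊔ x₂ := by rw [hx.join]; exact le_sup_left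
  exact ((h.mod2 x y x₁ h1 x₂ h2 hle).2).1 x₂ hx.p2

/-- `dist` lifted by an arbitrary `y`, via (Mod1). -/
theorem lift_dist (h : CDirectSum c I₁ I₂) {x₁ x₂ x : α} (h1 : x₁ ∈ I₁) (h2 : x₂ ∈ I₂)
    (hx : Phi c x₁ x₂ x) (y : α) : PMeet (x ⊔ y ⊔ x₁) (x ⊔ y ⊔ x₂) (x ⊔ y) :=
  (h.mod1 x y x₁ h1 x₂ h2 (le_of_eq hx.join)).1 x hx.dist

/-- Uniqueness of `x` in `φ_c(x₁, x₂, x)`: one inequality. -/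
theorem phi_le (h : CDirectSum c I₁ I₂) {x₁ x₂ x x' : α} (h1 : x₁ ∈ I₁) (h2 : x₂ ∈ I₂)
    (hx : Phi c x₁ x₂ x) (hx' : Phi c x₁ x₂ x') : x ≤ x' := by
  have hxc : x ≤ x' ⊔ c := by
    calc x ≤ x ⊔ c := le_sup_left
      _ = x₁ ⊔ x₂ := hx.join.symm
      _ = x' ⊔ c := hx'.join
  have hx1 : x ≤ x₁ ⊔ x' :=
    (lift_p1 h h1 h2 hx x').2.2 x (le_sup_of_le_left le_sup_left)
      (hxc.trans ((by ac_rfl : x' ⊔ c = c ⊔ x').le.trans le_sup_left))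
  have hx2 : x ≤ x₂ ⊔ x' :=
    (lift_p2 h h1 h2 hx x').2.2 x (le_sup_of_le_left le_sup_left)
      (hxc.trans ((by ac_rfl : x' ⊔ c = c ⊔ x').le.trans le_sup_left))
  exact hx'.dist.2.2 x (hx1.trans_eq (by ac_rfl)) (hx2.trans_eq (by ac_rfl))

/-- Uniqueness of the first component. -/
theorem comp_le1 (h : CDirectSum c I₁ I₂) {x₁ x₂ z₁ z₂ x : α}
    (h1 : x₁ ∈ I₁) (h2 : x₂ ∈ I₂) (g1 : z₁ ∈ I₁) (g2 : z₂ ∈ I₂)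
    (hx : Phi c x₁ x₂ x) (hz : Phi c z₁ z₂ x) : z₁ ≤ x₁ := by
  have hz1c : z₁ ≤ x ⊔ c := by rw [← hz.join]; exact le_sup_left
  have h1' : z₁ ≤ x₁ ⊔ x₂ := by rw [hx.join]; exact hz1c
  have habs := (h.abs1 z₁ g1 x₁ h1 x₂ h2).1 z₁ (pmeet_self_of_le h1')
  have hz1cx : z₁ ≤ c ⊔ x₁ := habs.2.1.trans (by ac_rfl : x₁ ⊔ c = c ⊔ x₁).le
  have hd := lift_dist h g1 g2 hz x₁
  have hb : z₁ ≤ x ⊔ x₁ ⊔ z₂ := by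
    refine hz1c.trans ?_
    calc x ⊔ c ≤ x ⊔ (x₁ ⊔ z₂) := sup_le_sup_left (c_le_sup h h1 g2) x
      _ = x ⊔ x₁ ⊔ z₂ := (sup_assoc _ _ _).symm
  exact hx.p1.2.2 z₁ (hd.2.2 z₁ le_sup_right hb) hz1cx

/-- Uniqueness of the second component. -/
theorem comp_le2 (h : CDirectSum c I₁ I₂) {x₁ x₂ z₁ z₂ x : α}
    (h1 : x₁ ∈ I₁) (h2 : x₂ ∈ I₂) (g1 : z₁ ∈ I₁) (g2 : z₂ ∈ I₂)
    (hx : Phi c x₁ x₂ x) (hz : Phi c z₁ z₂ x) : z₂ ≤ x₂ := by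
  have hz2c : z₂ ≤ x ⊔ c := by rw [← hz.join]; exact le_sup_right
  have h2' : z₂ ≤ x₂ ⊔ x₁ := by
    refine hz2c.trans ?_; rw [← hx.join]; exact (by ac_rfl : x₁ ⊔ x₂ = x₂ ⊔ x₁).le
  have habs := (h.abs2 z₂ g2 x₂ h2 x₁ h1).1 z₂ (pmeet_self_of_le h2')
  have hz2cx : z₂ ≤ c ⊔ x₂ := habs.2.1.trans (by ac_rfl : x₂ ⊔ c = c ⊔ x₂).le
  have hd := lift_dist h g1 g2 hz x₂
  have hb : z₂ ≤ x ⊔ x₂ ⊔ z₁ := by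
    refine hz2c.trans ?_
    calc x ⊔ c ≤ x ⊔ (z₁ ⊔ x₂) := sup_le_sup_left (c_le_sup h g1 h2) x
      _ ≤ x ⊔ x₂ ⊔ z₁ := le_of_eq (by ac_rfl)
  exact hx.p2.2.2 z₂ (hd.2.2 z₂ hb le_sup_right) hz2cx

/-- φ_c preserves joins. -/
theorem phi_sup (h : CDirectSum c I₁ I₂) {x₁ x₂ z₁ z₂ x z : α}
    (h1 : x₁ ∈ I₁) (h2 : x₂ ∈ I₂) (g1 : z₁ ∈ I₁) (g2 : z₂ ∈ I₂)
    (hx : Phi c x₁ x₂ x) (hz : Phi c z₁ z₂ z) :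
    Phi c (x₁ ⊔ z₁) (x₂ ⊔ z₂) (x ⊔ z) := by
  obtain ⟨w, hw⟩ := h.exi (x₁ ⊔ z₁) (h.sub1 x₁ h1 z₁ g1) (x₂ ⊔ z₂) (h.sub2 x₂ h2 z₂ g2)
  suffices hEq : w = x ⊔ z by rw [← hEq]; exact hw
  have hXX : x₁ ⊔ z₁ ⊔ (x₂ ⊔ z₂) = x ⊔ z ⊔ c := by
    have e1 : x₁ ⊔ z₁ ⊔ (x₂ ⊔ z₂) = (x₁ ⊔ x₂) ⊔ (z₁ ⊔ z₂) := by ac_rfl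
    rw [e1, hx.join, hz.join]; ac_rfl
  have hwc : w ⊔ c = x ⊔ z ⊔ c := by rw [← hw.join, hXX]
  -- x ≤ w and z ≤ w
  have hx_le_wc : x ≤ w ⊔ c := by
    calc x ≤ x ⊔ z ⊔ c := le_sup_of_le_left le_sup_left
      _ = w ⊔ c := hwc.symm
  have hz_le_wc : z ≤ w ⊔ c := by
    calc z ≤ x ⊔ z ⊔ c := le_sup_of_le_left le_sup_right
      _ = w ⊔ c := hwc.symm
  have hx1w : x ≤ x₁ ⊔ w :=
    (lift_p1 h h1 h2 hx w).2.2 x (le_sup_of_le_left le_sup_left)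
      (hx_le_wc.trans ((by ac_rfl : w ⊔ c = c ⊔ w).le.trans le_sup_left))
  have hx2w : x ≤ x₂ ⊔ w :=
    (lift_p2 h h1 h2 hx w).2.2 x (le_sup_of_le_left le_sup_left)
      (hx_le_wc.trans ((by ac_rfl : w ⊔ c = c ⊔ w).le.trans le_sup_left))
  have hz1w : z ≤ z₁ ⊔ w :=
    (lift_p1 h g1 g2 hz w).2.2 z (le_sup_of_le_left le_sup_left)
      (hz_le_wc.trans ((by ac_rfl : w ⊔ c = c ⊔ w).le.trans le_sup_left))
  have hz2w : z ≤ z₂ ⊔ w :=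
    (lift_p2 h g1 g2 hz w).2.2 z (le_sup_of_le_left le_sup_left)
      (hz_le_wc.trans ((by ac_rfl : w ⊔ c = c ⊔ w).le.trans le_sup_left))
  have hxw : x ≤ w :=
    hw.dist.2.2 x
      (hx1w.trans (sup_le (le_sup_of_le_right le_sup_left) le_sup_left))
      (hx2w.trans (sup_le (le_sup_of_le_right le_sup_left) le_sup_left))
  have hzw : z ≤ w :=
    hw.dist.2.2 z
      (hz1w.trans (sup_le (le_sup_of_le_right le_sup_right) le_sup_left))
      (hz2w.trans (sup_le (le_sup_of_le_right le_sup_right) le_sup_left))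
  -- w ≤ x ⊔ z
  have hw_le_Wc : w ≤ x ⊔ z ⊔ c := le_sup_left.trans_eq hwc
  have hwX1 : w ≤ (x₁ ⊔ z₁) ⊔ (x ⊔ z) :=
    (lift_p1 h (h.sub1 x₁ h1 z₁ g1) (h.sub2 x₂ h2 z₂ g2) hw (x ⊔ z)).2.2 w
      (le_sup_of_le_left le_sup_left)
      (hw_le_Wc.trans (le_sup_of_le_left (by ac_rfl : x ⊔ z ⊔ c = c ⊔ (x ⊔ z)).le))
  have hwX2 : w ≤ (x₂ ⊔ z₂) ⊔ (x ⊔ z) :=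
    (lift_p2 h (h.sub1 x₁ h1 z₁ g1) (h.sub2 x₂ h2 z₂ g2) hw (x ⊔ z)).2.2 w
      (le_sup_of_le_left le_sup_left)
      (hw_le_Wc.trans (le_sup_of_le_left (by ac_rfl : x ⊔ z ⊔ c = c ⊔ (x ⊔ z)).le))
  have hw3 : w ≤ x ⊔ (z ⊔ z₁) := by
    refine (lift_dist h h1 h2 hx (z ⊔ z₁)).2.2 w (hwX1.trans_eq (by ac_rfl)) ?_
    refine hw_le_Wc.trans ?_
    calc x ⊔ z ⊔ c ≤ x ⊔ z ⊔ (z₁ ⊔ x₂) := sup_le_sup_left (c_le_sup h g1 h2) _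
      _ = x ⊔ (z ⊔ z₁) ⊔ x₂ := by ac_rfl
  have hw4 : w ≤ x ⊔ (z ⊔ z₂) := by
    refine (lift_dist h h1 h2 hx (z ⊔ z₂)).2.2 w ?_ (hwX2.trans_eq (by ac_rfl))
    refine hw_le_Wc.trans ?_
    calc x ⊔ z ⊔ c ≤ x ⊔ z ⊔ (x₁ ⊔ z₂) := sup_le_sup_left (c_le_sup h h1 g2) _
      _ = x ⊔ (z ⊔ z₂) ⊔ x₁ := by ac_rfl
  have hwW : w ≤ z ⊔ x :=
    (lift_dist h g1 g2 hz x).2.2 w (hw3.trans_eq (by ac_rfl)) (hw4.trans_eq (by ac_rfl))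
  exact le_antisymm (hwW.trans_eq (sup_comm z x)) (sup_le hxw hzw)

end PhiAux

/-- in a c-direct sum, φ_c defines a semilattice isomorphism
between I₁ × I₂ (componentwise join) and A: it is a well-defined bijective
correspondence which preserves joins. -/
theorem phi_isomorphism [SemilatticeSup α] (c : α) (I₁ I₂ : Set α)
    (h : CDirectSum c I₁ I₂) :
    (∀ x₁ ∈ I₁, ∀ x₂ ∈ I₂, ∃! x : α, Phi c x₁ x₂ x) ∧
    (∀ x : α, ∃! p : α × α, p.1 ∈ I₁ ∧ p.2 ∈ I₂ ∧ Phi c p.1 p.2 x) ∧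
    (∀ x₁ ∈ I₁, ∀ x₂ ∈ I₂, ∀ z₁ ∈ I₁, ∀ z₂ ∈ I₂, ∀ x z : α,
      Phi c x₁ x₂ x → Phi c z₁ z₂ z →
      Phi c (x₁ ⊔ z₁) (x₂ ⊔ z₂) (x ⊔ z)) := by
  refine ⟨?_, ?_, ?_⟩
  · intro x₁ h1 x₂ h2
    obtain ⟨x, hx⟩ := h.exi x₁ h1 x₂ h2
    exact ⟨x, hx, fun y hy =>
      le_antisymm (phi_le h h1 h2 hy hx) (phi_le h h1 h2 hx hy)⟩
  · intro x
    obtain ⟨x₁, h1, x₂, h2, hx⟩ := h.onto x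
    refine ⟨(x₁, x₂), ⟨h1, h2, hx⟩, ?_⟩
    rintro ⟨z₁, z₂⟩ ⟨g1, g2, hz⟩
    have e1 : z₁ = x₁ :=
      le_antisymm (comp_le1 h h1 h2 g1 g2 hx hz) (comp_le1 h g1 g2 h1 h2 hz hx)
    have e2 : z₂ = x₂ :=
      le_antisymm (comp_le2 h h1 h2 g1 g2 hx hz) (comp_le2 h g1 g2 h1 h2 hz hx)
    simp [e1, e2]
  · intro x₁ h1 x₂ h2 z₁ g1 z₂ g2 x z hx hz
    exact phi_sup h h1 h2 g1 g2 hx hz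
end

section
/- Let A₁ and A₂ be join-semilattices, A = A₁ × A₂, c = ⟨c', c''⟩ ∈ A, I₁ = {⟨x', c''⟩ : x' ∈ A₁} and I₂ = {⟨c', x''⟩ : x'' ∈ A₂}. Then I₁ and I₂ are subsemilattices of A satisfying the absorption axiom: for all x₁, y₁ ∈ I₁ and z₂ ∈ I₂, x₁ ∧ (y₁∨z₂) = x₁ ∧ (y₁∨c) (i.e., if either infimum exists then both exist and they are equal), and symmetrically with I₁, I₂ interchanged. -/
variable {α : Type*}

/-- in a product A₁ × A₂, the sets I₁ = A₁ × {c''} and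
key lemma. -/
theorem meetEq_of_le [SemilatticeSup α] {a b b' : α} (h1 : b' ≤ b)
    (h2 : ∀ u, u ≤ a → u ≤ b → u ≤ b') : MeetEq a b a b' := by
  constructor
  · rintro m ⟨ma, mb, hm⟩
    exact ⟨ma, h2 m ma mb, fun u ua ub => hm u ua (ub.trans h1)⟩
  · rintro m ⟨ma, mb, hm⟩
    exact ⟨ma, mb.trans h1, fun u ua ub => hm u ua (h2 u ua ub)⟩

/-- in a product A₁ × A₂, the sets I₁ = A₁ × {c''} and
I₂ = {c'} × A₂ are subsemilattices satisfying the absorption axiom. -/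
theorem abs_in_product {A₁ A₂ : Type*} [SemilatticeSup A₁] [SemilatticeSup A₂]
    (c' : A₁) (c'' : A₂) :
    SubSemilattice {p : A₁ × A₂ | ∃ x' : A₁, p = (x', c'')} ∧
    SubSemilattice {p : A₁ × A₂ | ∃ x'' : A₂, p = (c', x'')} ∧
    (∀ x₁ ∈ {p : A₁ × A₂ | ∃ x' : A₁, p = (x', c'')},
      ∀ y₁ ∈ {p : A₁ × A₂ | ∃ x' : A₁, p = (x', c'')},
      ∀ z₂ ∈ {p : A₁ × A₂ | ∃ x'' : A₂, p = (c', x'')},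
        MeetEq x₁ (y₁ ⊔ z₂) x₁ (y₁ ⊔ (c', c''))) ∧
    (∀ x₂ ∈ {p : A₁ × A₂ | ∃ x'' : A₂, p = (c', x'')},
      ∀ y₂ ∈ {p : A₁ × A₂ | ∃ x'' : A₂, p = (c', x'')},
      ∀ z₁ ∈ {p : A₁ × A₂ | ∃ x' : A₁, p = (x', c'')},
        MeetEq x₂ (y₂ ⊔ z₁) x₂ (y₂ ⊔ (c', c''))) := by
  refine ⟨?_, ?_, ?_, ?_⟩
  · rintro _ ⟨a, rfl⟩ _ ⟨b, rfl⟩; exact ⟨a ⊔ b, by simp [Prod.mk_sup_mk]⟩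
  · rintro _ ⟨a, rfl⟩ _ ⟨b, rfl⟩; exact ⟨a ⊔ b, by simp [Prod.mk_sup_mk]⟩
  · rintro _ ⟨a, rfl⟩ _ ⟨b, rfl⟩ _ ⟨d, rfl⟩
    simp only [Prod.mk_sup_mk, sup_idem]
    apply meetEq_of_le
    · exact ⟨le_refl _, le_sup_left⟩
    · rintro u ⟨u1, u2⟩ ⟨v1, v2⟩; simp only [Prod.le_def] at *; exact ⟨v1, u2⟩
  · rintro _ ⟨a, rfl⟩ _ ⟨b, rfl⟩ _ ⟨d, rfl⟩
    simp only [Prod.mk_sup_mk, sup_idem]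
    apply meetEq_of_le
    · exact ⟨le_sup_left, le_refl _⟩
    · rintro u ⟨u1, u2⟩ ⟨v1, v2⟩; simp only [Prod.le_def] at *; exact ⟨u1, v2⟩
end

section
/- Let A be a join-semilattice with greatest element 1, and let I₁, I₂ be subsemilattices of A. Then A = I₁ ⊕_1 I₂ holds if and only if: (exi') x₁ ∨ x₂ = 1 for all x₁ ∈ I₁, x₂ ∈ I₂; (onto') for every x ∈ A there exist x₁ ∈ I₁ and x₂ ∈ I₂ such that the infimum x₁ ∧ x₂ exists and equals x; and (Mod1') for all x₁ ∈ I₁, x₂ ∈ I₂ and all y ∈ A, (x₁ ∧ x₂) ∨ y = (y∨x₁) ∧ (y∨x₂) (both infima existing). -/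
variable {α : Type*}

lemma pmeet_unique [SemilatticeSup α] {a b m m' : α}
    (h : PMeet a b m) (h' : PMeet a b m') : m = m' :=
  le_antisymm (h'.2.2 m h.1 h.2.1) (h.2.2 m' h'.1 h'.2.1)

lemma pmeet_top [SemilatticeSup α] [OrderTop α] (a : α) : PMeet a (⊤ : α) a :=
  ⟨le_rfl, le_top, fun _ hu _ => hu⟩

lemma pmeet_top_iff [SemilatticeSup α] [OrderTop α] {a m : α} :
    PMeet a (⊤ : α) m ↔ m = a :=
  ⟨fun h => pmeet_unique h (pmeet_top a), fun h => h ▸ pmeet_top a⟩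

lemma phi_top_iff [SemilatticeSup α] [OrderTop α] {x₁ x₂ x : α} :
    Phi (⊤ : α) x₁ x₂ x ↔ PMeet x₁ x₂ x ∧ x₁ ⊔ x₂ = ⊤ := by
  constructor
  · rintro ⟨hd, hp1, hp2, hj⟩
    have hx1 : x ≤ x₁ :=
      le_sup_left.trans (hp1.2.2 (x ⊔ x₁) le_rfl (sup_le_sup_right le_top _))
    have hx2 : x ≤ x₂ :=
      le_sup_left.trans (hp2.2.2 (x ⊔ x₂) le_rfl (sup_le_sup_right le_top _))
    rw [sup_eq_right.mpr hx1, sup_eq_right.mpr hx2] at hd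
    refine ⟨hd, ?_⟩
    rw [hj, sup_top_eq]
  · rintro ⟨hm, hj⟩
    have hx1 : x ≤ x₁ := hm.1
    have hx2 : x ≤ x₂ := hm.2.1
    refine ⟨?_, ?_, ?_, ?_⟩
    · rwa [sup_eq_right.mpr hx1, sup_eq_right.mpr hx2]
    · rw [sup_eq_right.mpr hx1, top_sup_eq]; exact pmeet_top x₁
    · rw [sup_eq_right.mpr hx2, top_sup_eq]; exact pmeet_top x₂
    · rw [hj, sup_top_eq]

lemma meetJoinEq_top [SemilatticeSup α] [OrderTop α] (x y z : α) :
    MeetJoinEq (x ⊔ z) (⊤ : α) y (x ⊔ y ⊔ z) (⊤ : α) := by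
  constructor
  · intro n hn
    rw [pmeet_top_iff] at hn ⊢
    rw [hn, sup_right_comm]
  · intro n hn
    rw [pmeet_top_iff] at hn
    exact ⟨x ⊔ z, pmeet_top _, by rw [hn, sup_right_comm]⟩

/-- characterization of 1-direct sums in a join-semilattice with
greatest element: exi', onto' and Mod1'. -/
theorem direct_sum_with_top [SemilatticeSup α] [OrderTop α] (I₁ I₂ : Set α)
    (h₁ : SubSemilattice I₁) (h₂ : SubSemilattice I₂) :
    CDirectSum (⊤ : α) I₁ I₂ ↔
      ((∀ x₁ ∈ I₁, ∀ x₂ ∈ I₂, x₁ ⊔ x₂ = (⊤ : α)) ∧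
       (∀ x : α, ∃ x₁ ∈ I₁, ∃ x₂ ∈ I₂, PMeet x₁ x₂ x) ∧
       (∀ x₁ ∈ I₁, ∀ x₂ ∈ I₂, ∀ y : α, ∃ m : α,
          PMeet x₁ x₂ m ∧ PMeet (y ⊔ x₁) (y ⊔ x₂) (m ⊔ y))) := by
  constructor
  · intro hD
    refine ⟨?_, ?_, ?_⟩
    · intro x₁ hm1 x₂ hm2
      obtain ⟨x, hphi⟩ := hD.exi x₁ hm1 x₂ hm2
      exact (phi_top_iff.mp hphi).2
    · intro x
      obtain ⟨x₁, hm1, x₂, hm2, hphi⟩ := hD.onto x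
      exact ⟨x₁, hm1, x₂, hm2, (phi_top_iff.mp hphi).1⟩
    · intro x₁ hm1 x₂ hm2 y
      obtain ⟨x, hphi⟩ := hD.exi x₁ hm1 x₂ hm2
      have hp := (phi_top_iff.mp hphi).1
      have hx1 : x ≤ x₁ := hp.1
      have hx2 : x ≤ x₂ := hp.2.1
      refine ⟨x, hp, ?_⟩
      have key := (hD.mod1 x y x₁ hm1 x₂ hm2 (le_top.trans le_sup_right)).1 x hphi.1
      rwa [sup_assoc x y x₁, sup_assoc x y x₂,
        sup_eq_right.mpr (hx1.trans le_sup_right),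
        sup_eq_right.mpr (hx2.trans le_sup_right)] at key
  · rintro ⟨hexi, honto, hmod⟩
    refine ⟨h₁, h₂, ?_, ?_, ?_, ?_, ?_, ?_⟩
    · intro x y x₁ hm1 x₂ hm2 _
      obtain ⟨m, hm, hA⟩ := hmod x₁ hm1 x₂ hm2 x
      obtain ⟨m', hm', hB⟩ := hmod x₁ hm1 x₂ hm2 (x ⊔ y)
      rw [pmeet_unique hm' hm] at hB
      constructor
      · intro n hn
        have hnm : n = m ⊔ x := pmeet_unique hn hA
        rw [hnm, sup_assoc m x y]
        exact hB
      · intro n hn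
        exact ⟨m ⊔ x, hA, by rw [pmeet_unique hn hB, sup_assoc]⟩
    · intro x y x₁ hm1 x₂ hm2 _
      constructor
      · have h := meetJoinEq_top x y x₁
        simpa [top_sup_eq] using h
      · have h := meetJoinEq_top x y x₂
        simpa [top_sup_eq] using h
    · intro x₁ hx1 y₁ hy1 z₂ hz2
      rw [hexi y₁ hy1 z₂ hz2, sup_top_eq]
      exact ⟨fun m h => h, fun m h => h⟩
    · intro x₂ hx2 y₂ hy2 z₁ hz1
      rw [sup_comm y₂ z₁, hexi z₁ hz1 y₂ hy2, sup_top_eq]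
      exact ⟨fun m h => h, fun m h => h⟩
    · intro x₁ hm1 x₂ hm2
      obtain ⟨m, hm, -⟩ := hmod x₁ hm1 x₂ hm2 x₁
      exact ⟨m, phi_top_iff.mpr ⟨hm, hexi x₁ hm1 x₂ hm2⟩⟩
    · intro x
      obtain ⟨x₁, hm1, x₂, hm2, hm⟩ := honto x
      exact ⟨x₁, hm1, x₂, hm2, phi_top_iff.mpr ⟨hm, hexi x₁ hm1 x₂ hm2⟩⟩
end

section
/- Let A be a join-semilattice with greatest element 1 and suppose A = I₁ ⊕_1 I₂. Then I₁ and I₂ are dual ideals (upward closed, join-closed subsets) of A. -/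
variable {α : Type*}

/-- in a 1-direct sum, the summands are dual ideals: nonempty,
upward closed (hence join-closed) subsets. -/
theorem summands_are_dual_ideals [SemilatticeSup α] [OrderTop α]
    (I₁ I₂ : Set α) (h : CDirectSum (⊤ : α) I₁ I₂) :
    I₁.Nonempty ∧ (∀ a ∈ I₁, ∀ b : α, a ≤ b → b ∈ I₁) ∧
      (∀ a ∈ I₁, ∀ b ∈ I₁, a ⊔ b ∈ I₁) ∧
    I₂.Nonempty ∧ (∀ a ∈ I₂, ∀ b : α, a ≤ b → b ∈ I₂) ∧
      (∀ a ∈ I₂, ∀ b ∈ I₂, a ⊔ b ∈ I₂) := by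
  obtain ⟨x₁, hx₁, x₂, hx₂, -⟩ := h.onto ⊤
  refine ⟨⟨x₁, hx₁⟩, ?_, h.sub1, ⟨x₂, hx₂⟩, ?_, h.sub2⟩
  · intro a ha b hab
    obtain ⟨b₁, hb₁, b₂, hb₂, hmeet, hp1, hp2, -⟩ := h.onto b
    have hbb1 : b ≤ b₁ := le_trans le_sup_left (hp1.2.2 (b ⊔ b₁) le_rfl (le_top.trans le_sup_left))
    have hbb2 : b ≤ b₂ := le_trans le_sup_left (hp2.2.2 (b ⊔ b₂) le_rfl (le_top.trans le_sup_left))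
    obtain ⟨x, hphi⟩ := h.exi a ha b₂ hb₂
    have hb2top : b₂ = ⊤ := by
      have hj := hphi.2.2.2
      rw [sup_top_eq, sup_eq_right.mpr (hab.trans hbb2)] at hj
      exact hj
    have hb1b : b₁ ≤ b :=
      le_trans le_sup_right (hmeet.2.2 (b ⊔ b₁) le_rfl (by rw [hb2top, sup_top_eq]; exact le_top))
    rwa [le_antisymm hbb1 hb1b]
  · intro a ha b hab
    obtain ⟨b₁, hb₁, b₂, hb₂, hmeet, hp1, hp2, -⟩ := h.onto b
    have hbb1 : b ≤ b₁ := le_trans le_sup_left (hp1.2.2 (b ⊔ b₁) le_rfl (le_top.trans le_sup_left))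
    have hbb2 : b ≤ b₂ := le_trans le_sup_left (hp2.2.2 (b ⊔ b₂) le_rfl (le_top.trans le_sup_left))
    obtain ⟨x, hphi⟩ := h.exi b₁ hb₁ a ha
    have hb1top : b₁ = ⊤ := by
      have hj := hphi.2.2.2
      rw [sup_top_eq, sup_eq_left.mpr (hab.trans hbb1)] at hj
      exact hj
    have hb2b : b₂ ≤ b :=
      le_trans le_sup_right (hmeet.2.2 (b ⊔ b₂) (by rw [hb1top, sup_top_eq]; exact le_top) le_rfl)
    rwa [le_antisymm hbb2 hb2b]
end

section
/- Let A be a join-semilattice, c ∈ A, and suppose A = I₁ ⊕_c I₂ with projections π₁ : A → I₁, π₂ : A → I₂ determined by φ_c (i.e., φ_c(π₁(x), π₂(x), x) for all x). Then I₁ = {a ∈ A : π₂(a) = π₂(c)} and I₂ = {a ∈ A : π₁(a) = π₁(c)}; in other words, I₁ is exactly the class of c under the kernel of π₂, and I₂ is the class of c under the kernel of π₁. -/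
variable {α : Type*}

/-- in a c-direct sum with projections π₁, π₂ determined by φ_c,
I₁ is the class of c under ker π₂, and I₂ the class of c under ker π₁. -/
theorem summands_are_kernel_classes [SemilatticeSup α] (c : α)
    (I₁ I₂ : Set α) (h : CDirectSum c I₁ I₂) (π₁ π₂ : α → α)
    (hπ : ∀ x : α, π₁ x ∈ I₁ ∧ π₂ x ∈ I₂ ∧ Phi c (π₁ x) (π₂ x) x) :
    I₁ = {a : α | π₂ a = π₂ c} ∧ I₂ = {a : α | π₁ a = π₁ c} := by

  -- unpack Phi for c
  obtain ⟨hc1, hc2, hcφ⟩ := hπ c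
  rw [Phi] at hcφ
  obtain ⟨hcd, hcp1, hcp2, hcj⟩ := hcφ
  rw [sup_idem] at hcj
  -- π₁ c = c and π₂ c = c
  have hπ1c : π₁ c = c := by
    have h1 : π₁ c ≤ c := le_sup_left.trans hcj.le
    have h2 : c ≤ π₁ c := hcp1.2.2 c le_sup_left le_sup_left
    exact le_antisymm h1 h2
  have hπ2c : π₂ c = c := by
    have h1 : π₂ c ≤ c := le_sup_right.trans hcj.le
    have h2 : c ≤ π₂ c := hcp2.2.2 c le_sup_left le_sup_left
    exact le_antisymm h1 h2
  have hcI1 : c ∈ I₁ := hπ1c ▸ hc1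
  have hcI2 : c ∈ I₂ := hπ2c ▸ hc2
  constructor
  · ext a
    obtain ⟨h1, h2, hφ⟩ := hπ a
    rw [Phi] at hφ
    obtain ⟨hd, hp1, hp2, hj⟩ := hφ
    simp only [Set.mem_setOf_eq, hπ2c]
    constructor
    · intro ha
      -- π₂ a ≤ c via abs2
      have hm2 : π₂ a ≤ c ⊔ a := by rw [sup_comm c a, ← hj]; exact le_sup_right
      have habs := (h.abs2 (π₂ a) h2 c hcI2 a ha).1 (π₂ a)
        ⟨le_refl _, hm2, fun u hu _ => hu⟩
      have hle : π₂ a ≤ c := by simpa using habs.2.1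
      -- π₁ a ≤ a ⊔ π₂ a via abs1
      have hm1 : π₁ a ≤ a ⊔ c := by rw [← hj]; exact le_sup_left
      have habs1 := (h.abs1 (π₁ a) h1 a ha (π₂ a) h2).2 (π₁ a)
        ⟨le_refl _, hm1, fun u hu _ => hu⟩
      have h1a : π₁ a ≤ a := hd.2.2 (π₁ a) le_sup_right habs1.2.1
      have ha1 : a ≤ π₁ a := by
        refine hp1.2.2 a le_sup_left ?_
        calc a ≤ a ⊔ c := le_sup_left
          _ = π₁ a ⊔ π₂ a := hj.symm
          _ ≤ π₁ a ⊔ c := sup_le_sup_left hle _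
          _ = c ⊔ π₁ a := sup_comm _ _
      have heq : π₁ a = a := le_antisymm h1a ha1
      -- c ≤ π₂ a
      have hc2a : c ≤ a ⊔ π₂ a := by
        have : a ⊔ π₂ a = a ⊔ c := by rw [← hj, heq]
        rw [this]; exact le_sup_right
      exact le_antisymm hle (hp2.2.2 c hc2a le_sup_left)
    · intro ha
      have ha1 : a ≤ π₁ a := by
        refine hp1.2.2 a le_sup_left ?_
        calc a ≤ a ⊔ c := le_sup_left
          _ = π₁ a ⊔ π₂ a := hj.symm
          _ = π₁ a ⊔ c := by rw [ha]
          _ = c ⊔ π₁ a := sup_comm _ _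
      have h1a : π₁ a ≤ a := by
        refine hd.2.2 (π₁ a) le_sup_right ?_
        calc π₁ a ≤ π₁ a ⊔ π₂ a := le_sup_left
          _ = a ⊔ c := hj
          _ = a ⊔ π₂ a := by rw [ha]
      have : a = π₁ a := le_antisymm ha1 h1a
      exact this ▸ h1
  · ext a
    obtain ⟨h1, h2, hφ⟩ := hπ a
    rw [Phi] at hφ
    obtain ⟨hd, hp1, hp2, hj⟩ := hφ
    simp only [Set.mem_setOf_eq, hπ1c]
    constructor
    · intro ha
      have hm1 : π₁ a ≤ c ⊔ a := by rw [sup_comm c a, ← hj]; exact le_sup_left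
      have habs := (h.abs1 (π₁ a) h1 c hcI1 a ha).1 (π₁ a)
        ⟨le_refl _, hm1, fun u hu _ => hu⟩
      have hle : π₁ a ≤ c := by simpa using habs.2.1
      have hm2 : π₂ a ≤ a ⊔ c := by rw [← hj]; exact le_sup_right
      have habs2 := (h.abs2 (π₂ a) h2 a ha (π₁ a) h1).2 (π₂ a)
        ⟨le_refl _, hm2, fun u hu _ => hu⟩
      have h2a : π₂ a ≤ a := hd.2.2 (π₂ a) habs2.2.1 le_sup_right
      have ha2 : a ≤ π₂ a := by
        refine hp2.2.2 a le_sup_left ?_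
        calc a ≤ a ⊔ c := le_sup_left
          _ = π₁ a ⊔ π₂ a := hj.symm
          _ ≤ c ⊔ π₂ a := sup_le_sup_right hle _
      have heq : π₂ a = a := le_antisymm h2a ha2
      have hc1a : c ≤ a ⊔ π₁ a := by
        have : a ⊔ π₁ a = a ⊔ c := by
          rw [← hj, heq, sup_comm (π₁ a) a]
        rw [this]; exact le_sup_right
      exact le_antisymm hle (hp1.2.2 c hc1a le_sup_left)
    · intro ha
      have ha2 : a ≤ π₂ a := by
        refine hp2.2.2 a le_sup_left ?_
        calc a ≤ a ⊔ c := le_sup_left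
          _ = π₁ a ⊔ π₂ a := hj.symm
          _ = c ⊔ π₂ a := by rw [ha]
      have h2a : π₂ a ≤ a := by
        refine hd.2.2 (π₂ a) ?_ le_sup_right
        calc π₂ a ≤ π₁ a ⊔ π₂ a := le_sup_right
          _ = a ⊔ c := hj
          _ = a ⊔ π₁ a := by rw [ha]
      have : a = π₂ a := le_antisymm ha2 h2a
      exact this ▸ h2
end

section
/- Let A be a join-semilattice with both 0 and 1, and suppose A = I₁ ⊕_0 I₂ where I₁ and I₂ are ideals with I₁ ∩ I₂ = {0}. Then for every x ∈ A the decomposition x = x₁ ∨ x₂ with x₁ ∈ I₁, x₂ ∈ I₂ is unique, and the maps x ↦ x₁, x ↦ x₂ are join-homomorphisms A → I₁, A → I₂ inducing an isomorphism A ≅ I₁ × I₂. -/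
variable {α : Type*}

/-- a 0-direct sum into ideals with trivial intersection yields
unique decompositions, and the component maps are join-homomorphisms inducing
an isomorphism A ≅ I₁ × I₂. -/
theorem unique_decomposition [SemilatticeSup α] [BoundedOrder α]
    (I₁ I₂ : Set α)
    (hI₁ : (∀ a ∈ I₁, ∀ b : α, b ≤ a → b ∈ I₁) ∧ ∀ a ∈ I₁, ∀ b ∈ I₁, a ⊔ b ∈ I₁)
    (hI₂ : (∀ a ∈ I₂, ∀ b : α, b ≤ a → b ∈ I₂) ∧ ∀ a ∈ I₂, ∀ b ∈ I₂, a ⊔ b ∈ I₂)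
    (hcap : I₁ ∩ I₂ = {(⊥ : α)})
    (h : CDirectSum (⊥ : α) I₁ I₂) :
    (∀ x : α, ∃! p : α × α, p.1 ∈ I₁ ∧ p.2 ∈ I₂ ∧ p.1 ⊔ p.2 = x) ∧
    ∃ f g : α → α,
      (∀ x : α, f x ∈ I₁ ∧ g x ∈ I₂ ∧ f x ⊔ g x = x) ∧
      (∀ x y : α, f (x ⊔ y) = f x ⊔ f y ∧ g (x ⊔ y) = g x ⊔ g y) ∧
      (∀ a ∈ I₁, ∀ b ∈ I₂, ∃! x : α, f x = a ∧ g x = b) := by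
  
  classical
  -- uniqueness of decompositions
  have uniq : ∀ x₁ ∈ I₁, ∀ x₂ ∈ I₂, ∀ y₁ ∈ I₁, ∀ y₂ ∈ I₂,
      x₁ ⊔ x₂ = y₁ ⊔ y₂ → x₁ = y₁ ∧ x₂ = y₂ := by
    have key1 : ∀ x₁ ∈ I₁, ∀ x₂ ∈ I₂, ∀ y₁ ∈ I₁, ∀ y₂ ∈ I₂,
        x₁ ⊔ x₂ = y₁ ⊔ y₂ → x₁ ≤ y₁ := by
      intro x₁ h1 x₂ h2 y₁ h3 y₂ h4 he
      have := (h.abs1 x₁ h1 y₁ h3 y₂ h4).1 x₁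
        ⟨le_refl _, by rw [← he]; exact le_sup_left, fun u hu _ => hu⟩
      simpa using this.2.1
    have key2 : ∀ x₁ ∈ I₁, ∀ x₂ ∈ I₂, ∀ y₁ ∈ I₁, ∀ y₂ ∈ I₂,
        x₁ ⊔ x₂ = y₁ ⊔ y₂ → x₂ ≤ y₂ := by
      intro x₁ h1 x₂ h2 y₁ h3 y₂ h4 he
      have := (h.abs2 x₂ h2 y₂ h4 y₁ h3).1 x₂
        ⟨le_refl _, by rw [sup_comm y₂ y₁, ← he]; exact le_sup_right,
          fun u hu _ => hu⟩
      simpa using this.2.1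
    intro x₁ h1 x₂ h2 y₁ h3 y₂ h4 he
    exact ⟨le_antisymm (key1 x₁ h1 x₂ h2 y₁ h3 y₂ h4 he)
        (key1 y₁ h3 y₂ h4 x₁ h1 x₂ h2 he.symm),
      le_antisymm (key2 x₁ h1 x₂ h2 y₁ h3 y₂ h4 he)
        (key2 y₁ h3 y₂ h4 x₁ h1 x₂ h2 he.symm)⟩
  have exdec : ∀ x : α, ∃ x₁ ∈ I₁, ∃ x₂ ∈ I₂, x₁ ⊔ x₂ = x := by
    intro x
    obtain ⟨x₁, h1, x₂, h2, hphi⟩ := h.onto x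
    exact ⟨x₁, h1, x₂, h2, by simpa using hphi.2.2.2⟩
  have part1 : ∀ x : α, ∃! p : α × α, p.1 ∈ I₁ ∧ p.2 ∈ I₂ ∧ p.1 ⊔ p.2 = x := by
    intro x
    obtain ⟨x₁, h1, x₂, h2, he⟩ := exdec x
    refine ⟨(x₁, x₂), ⟨h1, h2, he⟩, ?_⟩
    rintro ⟨y₁, y₂⟩ ⟨g1, g2, ge⟩
    obtain ⟨e1, e2⟩ := uniq y₁ g1 y₂ g2 x₁ h1 x₂ h2 (ge.trans he.symm)
    simp [e1, e2]
  refine ⟨part1, fun x => (part1 x).choose.1, fun x => (part1 x).choose.2, ?_, ?_, ?_⟩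
  · intro x; exact (part1 x).choose_spec.1
  · intro x y
    have hx := (part1 x).choose_spec.1
    have hy := (part1 y).choose_spec.1
    have hmem : ((part1 x).choose.1 ⊔ (part1 y).choose.1 ∈ I₁) ∧
        ((part1 x).choose.2 ⊔ (part1 y).choose.2 ∈ I₂) :=
      ⟨hI₁.2 _ hx.1 _ hy.1, hI₂.2 _ hx.2.1 _ hy.2.1⟩
    have hjoin : ((part1 x).choose.1 ⊔ (part1 y).choose.1) ⊔
        ((part1 x).choose.2 ⊔ (part1 y).choose.2) = x ⊔ y := by
      rw [sup_sup_sup_comm, hx.2.2, hy.2.2]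
    have := (part1 (x ⊔ y)).choose_spec.2
      ((part1 x).choose.1 ⊔ (part1 y).choose.1,
       (part1 x).choose.2 ⊔ (part1 y).choose.2) ⟨hmem.1, hmem.2, hjoin⟩
    exact ⟨congrArg Prod.fst this.symm, congrArg Prod.snd this.symm⟩
  · intro a ha b hb
    refine ⟨a ⊔ b, ?_, ?_⟩
    · have := (part1 (a ⊔ b)).choose_spec.2 (a, b) ⟨ha, hb, rfl⟩
      exact ⟨congrArg Prod.fst this.symm, congrArg Prod.snd this.symm⟩
    · intro x ⟨e1, e2⟩
      have hx := (part1 x).choose_spec.1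
      have e1' : (part1 x).choose.1 = a := e1
      have e2' : (part1 x).choose.2 = b := e2
      rw [← hx.2.2, e1', e2']
end
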